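/- The set Q = {Q ∈ (ℝ²)^{N(N−1)/2} : Φ_{1jk}(Q) = 0 for all 2 ≤ j < k ≤ N}, where Φ_{1jk}(Q) = Q_{1j}L(Q_{1j})ᵀ + Q_{jk}L(Q_{jk})ᵀ − Q_{1k}L(Q_{1k})ᵀ, is parametrized by the chain components: the map sending (Q_{k,k+1})_{k=1}^{N-1} with prescribed sign conventions to the full tuple via Q̃_{ij} of equation (23) is a right inverse of the projection onto chain components, provided all the sums s_{ij} are nonzero. -/

import Mathlib

/-- Levi-Civita map Q ↦ Q L(Q)ᵀ. -/
def lc (Q : ℝ × ℝ) : ℝ × ℝ := (Q.1 ^ 2 - Q.2 ^ 2, 2 * Q.1 * Q.2)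

/-- Euclidean norm on ℝ². -/
noncomputable def nrm (q : ℝ × ℝ) : ℝ := Real.sqrt (q.1 ^ 2 + q.2 ^ 2)

/-- The explicit cancellation-avoiding square root for the Levi-Civita map
(equation (23)/(45) of the paper, with the prescribed sign conventions). -/
noncomputable def lcSqrt (s : ℝ × ℝ) : ℝ × ℝ :=
  if 0 ≤ s.1 then
    (Real.sqrt ((nrm s + s.1) / 2), s.2 / Real.sqrt (2 * (nrm s + s.1)))
  else
    (s.2 / Real.sqrt (2 * (nrm s - s.1)), Real.sqrt ((nrm s - s.1) / 2))

lemma lc_lcSqrt (s : ℝ × ℝ) (hs : s ≠ 0) : lc (lcSqrt s) = s := by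
  obtain ⟨a, b⟩ := s
  have hab : 0 < a ^ 2 + b ^ 2 := by
    have h : a ≠ 0 ∨ b ≠ 0 := by
      by_contra h
      push_neg at h
      exact hs (by simp [Prod.ext_iff, h.1, h.2])
    rcases h with h | h
    · positivity
    · positivity
  have hn2 : (nrm (a, b)) ^ 2 = a ^ 2 + b ^ 2 := Real.sq_sqrt hab.le
  have hnpos : 0 < nrm (a, b) := Real.sqrt_pos.mpr hab
  have hna : |a| ≤ nrm (a, b) := by
    rw [← Real.sqrt_sq_eq_abs]
    exact Real.sqrt_le_sqrt (by nlinarith)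
  set n := nrm (a, b) with hn
  rcases le_or_gt 0 a with ha | ha
  · have hp : 0 < n + a := by nlinarith
    have hr2 : (Real.sqrt ((n + a) / 2)) ^ 2 = (n + a) / 2 := Real.sq_sqrt (by linarith)
    have hrpos : 0 < Real.sqrt ((n + a) / 2) := Real.sqrt_pos.mpr (by linarith)
    have h2p : Real.sqrt (2 * (n + a)) = 2 * Real.sqrt ((n + a) / 2) := by
      rw [show 2 * (n + a) = 4 * ((n + a) / 2) by ring, show (4:ℝ) = 2 ^ 2 by norm_num,
        Real.sqrt_mul (by positivity), Real.sqrt_sq (by norm_num)]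
    simp only [lcSqrt, lc, ← hn, if_pos ha, h2p]
    set r := Real.sqrt ((n + a) / 2)
    rw [Prod.ext_iff]
    refine ⟨?_, ?_⟩
    · field_simp
      nlinarith [hr2, hn2]
    · field_simp
  · have hp : 0 < n - a := by nlinarith
    have hr2 : (Real.sqrt ((n - a) / 2)) ^ 2 = (n - a) / 2 := Real.sq_sqrt (by linarith)
    have hrpos : 0 < Real.sqrt ((n - a) / 2) := Real.sqrt_pos.mpr (by linarith)
    have h2p : Real.sqrt (2 * (n - a)) = 2 * Real.sqrt ((n - a) / 2) := by
      rw [show 2 * (n - a) = 4 * ((n - a) / 2) by ring, show (4:ℝ) = 2 ^ 2 by norm_num,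
        Real.sqrt_mul (by positivity), Real.sqrt_sq (by norm_num)]
    simp only [lcSqrt, lc, ← hn, if_neg (not_le.mpr ha), h2p]
    set r := Real.sqrt ((n - a) / 2)
    rw [Prod.ext_iff]
    refine ⟨?_, ?_⟩
    · field_simp
      nlinarith [hr2, hn2]
    · field_simp

/-- the constraint set 𝒬 is parametrized by the chain components:
the map sending the chain components (Qc k)_{k=1}^{N-1} to the full tuple via
Q̃_{ij} = lcSqrt (s_{ij}) is a right inverse of the projection onto the chain
components, and its image satisfies all constraints Φ_{1jk} = 0, provided all
sums s_{ij} are nonzero. -/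
theorem stmt17 (N : ℕ) (hN : 3 ≤ N) (Qc : ℕ → ℝ × ℝ)
    (hs0 : ∀ i j, 1 ≤ i → i + 2 ≤ j → j ≤ N →
      (∑ k ∈ Finset.Ico i j, lc (Qc k)) ≠ 0)
    (Q : ℕ → ℕ → ℝ × ℝ)
    (hQchain : ∀ k, 1 ≤ k → k ≤ N - 1 → Q k (k + 1) = Qc k)
    (hQnon : ∀ i j, 1 ≤ i → i + 2 ≤ j → j ≤ N →
      Q i j = lcSqrt (∑ k ∈ Finset.Ico i j, lc (Qc k))) :
    (∀ k, 1 ≤ k → k ≤ N - 1 → Q k (k + 1) = Qc k) ∧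
    (∀ j k, 2 ≤ j → j < k → k ≤ N →
      lc (Q 1 j) + lc (Q j k) - lc (Q 1 k) = 0) := by
  have key : ∀ i j, 1 ≤ i → i < j → j ≤ N →
      lc (Q i j) = ∑ k ∈ Finset.Ico i j, lc (Qc k) := by
    intro i j hi hij hjN
    rcases eq_or_lt_of_le (Nat.succ_le_of_lt hij) with h | h
    · rw [← h, hQchain i hi (by omega)]
      simp
    · rw [hQnon i j hi (by omega) hjN]
      exact lc_lcSqrt _ (hs0 i j hi (by omega) hjN)
  refine ⟨hQchain, fun j k hj hjk hkN => ?_⟩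
  rw [key 1 j (by omega) (by omega) (by omega), key j k (by omega) hjk hkN,
    key 1 k (by omega) (by omega) hkN,
    Finset.sum_Ico_consecutive _ (by omega : 1 ≤ j) hjk.le]
  simp
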